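/- Localization of the maximum for the penalized test function: let Γ be a junction, w ∈ USC(Γ) bounded, y ∈ Γ, L, K > 0, and ψ(x) = L(ρ(x,y) − Kρ(x,y)²). Then the maximum of w − ψ over Γ ∩ {x : ρ(x,y) ≤ (4K)^{-1}} is attained at some x̄ satisfying (3L/4)ρ(x̄,y) ≤ ψ(x̄) ≤ w(x̄) − w(y) ≤ osc(w) ≤ 2‖w‖_∞. If moreover L > 16·osc(w)·K/3, then ρ(x̄,y) < (4K)^{-1}; and if in addition x̄ ≠ y, then ψ is differentiable along each edge at x̄ with L/2 ≤ |ψ_{x_j}(x̄)| ≤ L for every j for which the edge-derivative is defined at x̄. -/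

import Mathlib

open Set Filter Topology

namespace Paper14

variable {N : ℕ}

/-- An upper semicontinuous function attains its max on a nonempty compact set. -/
lemma usc_exists_max {X : Type*} [TopologicalSpace X] {S : Set X} (hS : IsCompact S)
    (hne : S.Nonempty) {f : X → ℝ} (hf : UpperSemicontinuousOn f S) :
    ∃ x ∈ S, ∀ z ∈ S, f z ≤ f x := by
  by_contra hcon
  push_neg at hcon
  have h1 : ∀ x : X, ∃ y : X, x ∈ S → (y ∈ S ∧ f x < f y) := by
    intro x
    by_cases hx : x ∈ S
    · obtain ⟨y, hy, hlt⟩ := hcon x hx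
      exact ⟨y, fun _ => ⟨hy, hlt⟩⟩
    · exact ⟨hne.choose, fun h => absurd h hx⟩
  choose y hy using h1
  have h2 : ∀ x : X, ∃ U : Set X, x ∈ S → (IsOpen U ∧ x ∈ U ∧ ∀ z ∈ U ∩ S, f z < f (y x)) := by
    intro x
    by_cases hx : x ∈ S
    · have := hf x hx (f (y x)) (hy x hx).2
      rw [eventually_nhdsWithin_iff] at this
      obtain ⟨U, hUsub, hUopen, hxU⟩ := eventually_nhds_iff.1 this
      exact ⟨U, fun _ => ⟨hUopen, hxU, fun z hz => hUsub z hz.1 hz.2⟩⟩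
    · exact ⟨univ, fun h => absurd h hx⟩
  choose U hU using h2
  obtain ⟨t, htS, hcover⟩ := hS.elim_nhds_subcover U
    (fun x hx => ((hU x hx).1).mem_nhds (hU x hx).2.1)
  have htne : t.Nonempty := by
    obtain ⟨z, hz⟩ := hne
    obtain ⟨x, hx, -⟩ := mem_iUnion₂.1 (hcover hz)
    exact ⟨x, hx⟩
  obtain ⟨xb, hxbt, hxbmax⟩ := t.exists_max_image (fun x => f (y x)) htne
  have hyb : y xb ∈ S := (hy xb (htS xb hxbt)).1
  obtain ⟨x0, hx0t, hx0U⟩ := mem_iUnion₂.1 (hcover hyb)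
  have := (hU x0 (htS x0 hx0t)).2.2 (y xb) ⟨hx0U, hyb⟩
  exact absurd (hxbmax x0 hx0t) (not_le.2 this)

lemma hasDerivAt_aux (L K a b : ℝ) (s0 : ℝ) :
    HasDerivAt (fun s => L * ((a*s + b) - K * (a*s + b)^2)) (L * (a - 2*K*a*(a*s0+b))) s0 := by
  have h : HasDerivAt (fun s : ℝ => a*s + b) a s0 := by
    simpa using ((hasDerivAt_id s0).const_mul a).add_const b
  have h2 := (h.sub ((h.pow 2).const_mul K)).const_mul L
  refine h2.congr_deriv ?_
  simp only [Nat.cast_ofNat, show (2:ℕ) - 1 = 1 from rfl, pow_one]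
  ring

/-- Geodesic distance on the junction from the point `(j,s)` (edge `j`,
arc-length parameter `s`) to the point `y = (iy, ty)`. -/
noncomputable def rd (iy : Fin N) (ty : ℝ) (j : Fin N) (s : ℝ) : ℝ :=
  if j = iy then |s - ty| else s + ty

/-- The penalized test function `ψ(x) = L(ρ(x,y) − K ρ(x,y)²)`, edge-wise. -/
noncomputable def psi (L K : ℝ) (iy : Fin N) (ty : ℝ) (j : Fin N) (s : ℝ) : ℝ :=
  L * (rd iy ty j s - K * (rd iy ty j s) ^ 2)

/-- Oscillation of an edge-wise function over the junction `Γ`. -/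
noncomputable def oscJ (ℓ : Fin N → ℝ) (w : Fin N → ℝ → ℝ) : ℝ :=
  sSup (⋃ i, w i '' Set.Icc 0 (ℓ i)) - sInf (⋃ i, w i '' Set.Icc 0 (ℓ i))

/-- Sup norm of an edge-wise function over the junction `Γ`. -/
noncomputable def supNorm (ℓ : Fin N → ℝ) (w : Fin N → ℝ → ℝ) : ℝ :=
  sSup (⋃ i, (fun s => |w i s|) '' Set.Icc 0 (ℓ i))

lemma deriv_psi_ne (L K : ℝ) (iy j : Fin N) (hj : j ≠ iy) (ty s0 : ℝ) :
    deriv (psi L K iy ty j) s0 = L * (1 - 2*K*(s0 + ty)) := by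
  have h := hasDerivAt_aux L K 1 ty s0
  have he : psi L K iy ty j = fun s => L * ((1*s + ty) - K * (1*s + ty)^2) := by
    funext s; simp [psi, rd, hj]
  rw [he, h.deriv]; ring

lemma deriv_psi_gt (L K : ℝ) (iy : Fin N) (ty s0 : ℝ) (h : ty < s0) :
    deriv (psi L K iy ty iy) s0 = L * (1 - 2*K*(s0 - ty)) := by
  have had := hasDerivAt_aux L K 1 (-ty) s0
  have he : psi L K iy ty iy =ᶠ[𝓝 s0] fun s => L * ((1*s + -ty) - K * (1*s + -ty)^2) := by
    filter_upwards [eventually_gt_nhds h] with s hs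
    have hrd : rd iy ty iy s = s - ty := by
      rw [rd, if_pos rfl, abs_of_pos (sub_pos.2 hs)]
    simp only [psi, hrd]; ring
  rw [(had.congr_of_eventuallyEq he).deriv]; ring

lemma deriv_psi_lt (L K : ℝ) (iy : Fin N) (ty s0 : ℝ) (h : s0 < ty) :
    deriv (psi L K iy ty iy) s0 = -(L * (1 - 2*K*(ty - s0))) := by
  have had := hasDerivAt_aux L K (-1) ty s0
  have he : psi L K iy ty iy =ᶠ[𝓝 s0] fun s => L * (((-1)*s + ty) - K * ((-1)*s + ty)^2) := by
    filter_upwards [eventually_lt_nhds h] with s hs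
    have hrd : rd iy ty iy s = -(s - ty) := by
      rw [rd, if_pos rfl, abs_of_neg (sub_neg.2 hs)]
    simp only [psi, hrd]; ring
  rw [(had.congr_of_eventuallyEq he).deriv]; ring

lemma absBound (L K r d : ℝ) (hL : 0 < L) (hK : 0 < K) (hr0 : 0 ≤ r) (hrc : r < (4*K)⁻¹)
    (hd : d = L * (1 - 2*K*r) ∨ d = -(L * (1 - 2*K*r))) : L/2 ≤ |d| ∧ |d| ≤ L := by
  have hKr : 2*K*r < 1/2 := by
    have h1 : K * r < K * (4*K)⁻¹ := mul_lt_mul_of_pos_left hrc hK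
    have h2 : K * (4*K)⁻¹ = 1/4 := by field_simp
    nlinarith
  have hpos : 0 ≤ L * (1 - 2*K*r) := by nlinarith
  have habs : |d| = L * (1 - 2*K*r) := by
    rcases hd with rfl | rfl
    · exact abs_of_nonneg hpos
    · rw [abs_neg]; exact abs_of_nonneg hpos
  rw [habs]
  constructor <;>
    nlinarith [mul_nonneg hL.le (mul_nonneg (mul_nonneg (by norm_num : (0:ℝ) ≤ 2) hK.le) hr0),
      mul_lt_mul_of_pos_left hKr hL]

/-- Lemma A.1, localization of the maximum for the penalized
test function `ψ = L(ρ(·,y) − Kρ(·,y)²)`.  For a bounded `w ∈ USC(Γ)`, the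
maximum of `w − ψ` over `{ρ(·,y) ≤ (4K)⁻¹}` is attained at some `x̄ = (jb,tb)`
with `(3L/4)ρ(x̄,y) ≤ ψ(x̄) ≤ w(x̄) − w(y) ≤ osc(w) ≤ 2‖w‖_∞`; if
`L > 16 osc(w) K/3` then `ρ(x̄,y) < (4K)⁻¹`, and if moreover `x̄ ≠ y` then the
edge derivatives of `ψ` at `x̄` satisfy `L/2 ≤ |ψ_{x_j}(x̄)| ≤ L`. -/
theorem penalized_max (ℓ : Fin N → ℝ) (hℓ : ∀ i, 0 < ℓ i)
    (w : Fin N → ℝ → ℝ)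
    (hglue : ∀ i j : Fin N, w i 0 = w j 0)
    (husc : ∀ i, UpperSemicontinuousOn (w i) (Set.Icc 0 (ℓ i)))
    (hbdd : ∃ M : ℝ, ∀ i, ∀ t ∈ Set.Icc (0:ℝ) (ℓ i), |w i t| ≤ M)
    (iy : Fin N) (ty : ℝ) (hty : ty ∈ Set.Icc (0:ℝ) (ℓ iy))
    (L K : ℝ) (hLpos : 0 < L) (hKpos : 0 < K) :
    ∃ jb : Fin N, ∃ tb ∈ Set.Icc (0:ℝ) (ℓ jb),
      rd iy ty jb tb ≤ (4 * K)⁻¹ ∧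
      (∀ j, ∀ s ∈ Set.Icc (0:ℝ) (ℓ j), rd iy ty j s ≤ (4 * K)⁻¹ →
        w j s - psi L K iy ty j s ≤ w jb tb - psi L K iy ty jb tb) ∧
      (3 * L / 4) * rd iy ty jb tb ≤ psi L K iy ty jb tb ∧
      psi L K iy ty jb tb ≤ w jb tb - w iy ty ∧
      w jb tb - w iy ty ≤ oscJ ℓ w ∧
      oscJ ℓ w ≤ 2 * supNorm ℓ w ∧
      (L > 16 * oscJ ℓ w * K / 3 →
        rd iy ty jb tb < (4 * K)⁻¹ ∧
        (¬((jb = iy ∧ tb = ty) ∨ (tb = 0 ∧ ty = 0)) →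
          (L / 2 ≤ |deriv (psi L K iy ty jb) tb| ∧
            |deriv (psi L K iy ty jb) tb| ≤ L) ∧
          (tb = 0 → ∀ j, L / 2 ≤ |deriv (psi L K iy ty j) 0| ∧
            |deriv (psi L K iy ty j) 0| ≤ L))) := by
  classical
  obtain ⟨M, hM⟩ := hbdd
  have hc : (0:ℝ) < (4*K)⁻¹ := by positivity
  -- the admissible slice on edge j
  let S : Fin N → Set ℝ := fun j => Icc 0 (ℓ j) ∩ (rd iy ty j ⁻¹' Iic (4*K)⁻¹)
  have hrdcont : ∀ j, Continuous (rd iy ty j) := by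
    intro j
    by_cases h : j = iy
    · have he : rd iy ty j = fun s => |s - ty| := by funext s; rw [rd, if_pos h]
      rw [he]; exact (continuous_id.sub continuous_const).abs
    · have he : rd iy ty j = fun s => s + ty := by funext s; rw [rd, if_neg h]
      rw [he]; exact continuous_id.add continuous_const
  have hpsicont : ∀ j, Continuous (psi L K iy ty j) := by
    intro j
    have h := hrdcont j
    exact continuous_const.mul (h.sub (continuous_const.mul (h.pow 2)))
  have hScomp : ∀ j, IsCompact (S j) :=
    fun j => isCompact_Icc.inter_right (isClosed_Iic.preimage (hrdcont j))
  have hfusc : ∀ j, UpperSemicontinuousOn (fun s => w j s - psi L K iy ty j s) (S j) := by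
    intro j
    have h1 : UpperSemicontinuousOn (w j) (S j) := (husc j).mono inter_subset_left
    have h2 : UpperSemicontinuousOn (fun s => -(psi L K iy ty j s)) (S j) :=
      ((hpsicont j).neg).upperSemicontinuous.upperSemicontinuousOn _
    simpa [sub_eq_add_neg] using h1.add h2
  have hslice : ∀ j, ∃ s, (S j).Nonempty →
      (s ∈ S j ∧ ∀ t ∈ S j, w j t - psi L K iy ty j t ≤ w j s - psi L K iy ty j s) := by
    intro j
    by_cases hne : (S j).Nonempty
    · obtain ⟨s, hs, hmax⟩ := usc_exists_max (hScomp j) hne (hfusc j)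
      exact ⟨s, fun _ => ⟨hs, hmax⟩⟩
    · exact ⟨0, fun h => absurd h hne⟩
  choose x hx using hslice
  have htyS : ty ∈ S iy := by
    refine ⟨hty, ?_⟩
    simp only [mem_preimage, mem_Iic, rd, if_pos rfl, sub_self, abs_zero]
    exact hc.le
  let F : Finset (Fin N) := Finset.univ.filter (fun j => (S j).Nonempty)
  have hiyF : iy ∈ F := Finset.mem_filter.2 ⟨Finset.mem_univ _, ⟨ty, htyS⟩⟩
  obtain ⟨jb, hjbF, hjbmax⟩ :=
    F.exists_max_image (fun j => w j (x j) - psi L K iy ty j (x j)) ⟨iy, hiyF⟩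
  have hjbne : (S jb).Nonempty := (Finset.mem_filter.1 hjbF).2
  obtain ⟨hxS, hxmax⟩ := hx jb hjbne
  set tb := x jb with htb_def
  have hglobal : ∀ j, ∀ s ∈ Icc (0:ℝ) (ℓ j), rd iy ty j s ≤ (4*K)⁻¹ →
      w j s - psi L K iy ty j s ≤ w jb tb - psi L K iy ty jb tb := by
    intro j s hs hrd
    have hsS : s ∈ S j := ⟨hs, hrd⟩
    have hjF : j ∈ F := Finset.mem_filter.2 ⟨Finset.mem_univ _, ⟨s, hsS⟩⟩
    exact le_trans ((hx j ⟨s, hsS⟩).2 s hsS) (hjbmax j hjF)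
  have htbIcc : tb ∈ Icc (0:ℝ) (ℓ jb) := hxS.1
  have hrc : rd iy ty jb tb ≤ (4*K)⁻¹ := hxS.2
  have hr0 : 0 ≤ rd iy ty jb tb := by
    by_cases h : jb = iy
    · simp only [rd, if_pos h]; exact abs_nonneg _
    · simp only [rd, if_neg h]; linarith [htbIcc.1, hty.1]
  have hpsiy : psi L K iy ty iy ty = 0 := by simp [psi, rd]
  have hkey : w iy ty ≤ w jb tb - psi L K iy ty jb tb := by
    have h0 : rd iy ty iy ty ≤ (4*K)⁻¹ := by
      simp only [rd, if_pos rfl, sub_self, abs_zero]; exact hc.le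
    have := hglobal iy ty hty h0
    rw [hpsiy] at this; linarith
  -- (3L/4) r ≤ ψ(x̄)
  have hKr4 : K * rd iy ty jb tb ≤ 1/4 := by
    have h1 : K * rd iy ty jb tb ≤ K * (4*K)⁻¹ := mul_le_mul_of_nonneg_left hrc hKpos.le
    have h2 : K * (4*K)⁻¹ = 1/4 := by field_simp
    linarith [h2 ▸ h1]
  have h3 : (3 * L / 4) * rd iy ty jb tb ≤ psi L K iy ty jb tb := by
    have hpsieq : psi L K iy ty jb tb
        = L * (rd iy ty jb tb - K * (rd iy ty jb tb)^2) := rfl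
    rw [hpsieq]
    nlinarith [mul_nonneg (mul_nonneg hLpos.le hr0) (by linarith : (0:ℝ) ≤ 1/4 - K * rd iy ty jb tb)]
  have h4 : psi L K iy ty jb tb ≤ w jb tb - w iy ty := by linarith
  -- oscillation bounds
  have hmemU : ∀ j, ∀ s ∈ Icc (0:ℝ) (ℓ j), w j s ∈ ⋃ i, w i '' Icc 0 (ℓ i) :=
    fun j s hs => mem_iUnion.2 ⟨j, mem_image_of_mem _ hs⟩
  have hmemV : ∀ j, ∀ s ∈ Icc (0:ℝ) (ℓ j),
      |w j s| ∈ ⋃ i, (fun s => |w i s|) '' Icc 0 (ℓ i) :=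
    fun j s hs => mem_iUnion.2 ⟨j, mem_image_of_mem _ hs⟩
  have hUb : ∀ a ∈ ⋃ i, w i '' Icc 0 (ℓ i), a ≤ M := by
    intro a ha
    simp only [mem_iUnion, mem_image] at ha
    obtain ⟨i, t, ht, rfl⟩ := ha
    exact (abs_le.1 (hM i t ht)).2
  have hLb : ∀ a ∈ ⋃ i, w i '' Icc 0 (ℓ i), -M ≤ a := by
    intro a ha
    simp only [mem_iUnion, mem_image] at ha
    obtain ⟨i, t, ht, rfl⟩ := ha
    exact (abs_le.1 (hM i t ht)).1
  have hVb : ∀ a ∈ ⋃ i, (fun s => |w i s|) '' Icc 0 (ℓ i), a ≤ M := by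
    intro a ha
    simp only [mem_iUnion, mem_image] at ha
    obtain ⟨i, t, ht, rfl⟩ := ha
    exact abs_le.2 ⟨(abs_le.1 (hM i t ht)).1, (abs_le.1 (hM i t ht)).2⟩
  have hUne : (⋃ i, w i '' Icc 0 (ℓ i)).Nonempty := ⟨w iy ty, hmemU iy ty hty⟩
  have hbdda : BddAbove (⋃ i, w i '' Icc 0 (ℓ i)) := ⟨M, hUb⟩
  have hbddb : BddBelow (⋃ i, w i '' Icc 0 (ℓ i)) := ⟨-M, hLb⟩
  have hbddV : BddAbove (⋃ i, (fun s => |w i s|) '' Icc 0 (ℓ i)) := ⟨M, hVb⟩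
  have h5 : w jb tb - w iy ty ≤ oscJ ℓ w := by
    have h1 : w jb tb ≤ sSup (⋃ i, w i '' Icc 0 (ℓ i)) := le_csSup hbdda (hmemU jb tb htbIcc)
    have h2 : sInf (⋃ i, w i '' Icc 0 (ℓ i)) ≤ w iy ty := csInf_le hbddb (hmemU iy ty hty)
    rw [oscJ]; linarith
  have h6 : oscJ ℓ w ≤ 2 * supNorm ℓ w := by
    have hsup : ∀ a ∈ ⋃ i, w i '' Icc 0 (ℓ i), a ≤ supNorm ℓ w := by
      intro a ha
      simp only [mem_iUnion, mem_image] at ha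
      obtain ⟨i, t, ht, rfl⟩ := ha
      exact le_trans (le_abs_self _) (le_csSup hbddV (hmemV i t ht))
    have hinf : ∀ a ∈ ⋃ i, w i '' Icc 0 (ℓ i), -(supNorm ℓ w) ≤ a := by
      intro a ha
      simp only [mem_iUnion, mem_image] at ha
      obtain ⟨i, t, ht, rfl⟩ := ha
      have h1 : |w i t| ≤ supNorm ℓ w := le_csSup hbddV (hmemV i t ht)
      linarith [neg_abs_le (w i t)]
    have h1 : sSup (⋃ i, w i '' Icc 0 (ℓ i)) ≤ supNorm ℓ w := csSup_le hUne hsup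
    have h2 : -(supNorm ℓ w) ≤ sInf (⋃ i, w i '' Icc 0 (ℓ i)) := le_csInf hUne hinf
    rw [oscJ]; linarith
  refine ⟨jb, tb, htbIcc, hrc, hglobal, h3, h4, h5, h6, ?_⟩
  intro hL
  have hosc : (3 * L / 4) * rd iy ty jb tb ≤ oscJ ℓ w := by linarith
  have hstrict : rd iy ty jb tb < (4*K)⁻¹ := by
    rw [show ((4*K)⁻¹ : ℝ) = 1/(4*K) by rw [one_div], lt_div_iff₀ (by positivity)]
    nlinarith [hosc, hL, hr0, hLpos, hKpos,
      mul_le_mul_of_nonneg_right hosc hKpos.le]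
  refine ⟨hstrict, ?_⟩
  intro hne
  push_neg at hne
  obtain ⟨hne1, hne2⟩ := hne
  constructor
  · -- derivative bounds at (jb, tb)
    by_cases hj : jb = iy
    · rcases lt_trichotomy tb ty with h | h | h
      · have hd : deriv (psi L K iy ty jb) tb = -(L * (1 - 2*K*(ty - tb))) := by
          rw [hj]; exact deriv_psi_lt L K iy ty tb h
        have hr : rd iy ty jb tb = ty - tb := by
          rw [rd, if_pos hj, abs_of_neg (sub_neg.2 h)]; ring
        exact absBound L K (ty - tb) _ hLpos hKpos (by linarith) (hr ▸ hstrict) (Or.inr hd)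
      · exact absurd h (hne1 hj)
      · have hd : deriv (psi L K iy ty jb) tb = L * (1 - 2*K*(tb - ty)) := by
          rw [hj]; exact deriv_psi_gt L K iy ty tb h
        have hr : rd iy ty jb tb = tb - ty := by
          rw [rd, if_pos hj, abs_of_pos (sub_pos.2 h)]
        exact absBound L K (tb - ty) _ hLpos hKpos (by linarith) (hr ▸ hstrict) (Or.inl hd)
    · have hd := deriv_psi_ne L K iy jb hj ty tb
      have hr : rd iy ty jb tb = tb + ty := by rw [rd, if_neg hj]
      exact absBound L K (tb + ty) _ hLpos hKpos (by linarith [htbIcc.1, hty.1])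
        (hr ▸ hstrict) (Or.inl hd)
  · intro htb0 j
    have hty0 : ty ≠ 0 := hne2 htb0
    have htypos : 0 < ty := lt_of_le_of_ne hty.1 (Ne.symm hty0)
    have htyc : ty < (4*K)⁻¹ := by
      have hr : rd iy ty jb tb = ty := by
        rw [htb0]
        by_cases h : jb = iy
        · rw [rd, if_pos h, zero_sub, abs_neg, abs_of_pos htypos]
        · rw [rd, if_neg h, zero_add]
      rw [hr] at hstrict; exact hstrict
    by_cases h : j = iy
    · have hd : deriv (psi L K iy ty j) 0 = -(L * (1 - 2*K*ty)) := by
        rw [h, deriv_psi_lt L K iy ty 0 htypos]; ring_nf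
      exact absBound L K ty _ hLpos hKpos htypos.le htyc (Or.inr hd)
    · have hd : deriv (psi L K iy ty j) 0 = L * (1 - 2*K*ty) := by
        rw [deriv_psi_ne L K iy j h ty 0]; ring_nf
      exact absBound L K ty _ hLpos hKpos htypos.le htyc (Or.inl hd)

end Paper14
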